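/- If g : ℤ → ℝ satisfies the detailed balance condition K(k,l−1) g(k) g(l−1) = K(l,k−1) g(l) g(k−1) for all k,l ∈ ℤ with respect to a strictly positive kernel K, and g(i) = 0 for some i ∈ ℤ, then g ≡ 0 on ℤ. -/

import Mathlib

theorem detailed_balance_zero_propagates (K : ℤ → ℤ → ℝ) (hK : ∀ k l, 0 < K k l)
    (g : ℤ → ℝ)
    (hdb : ∀ k l : ℤ, K k (l - 1) * g k * g (l - 1) = K l (k - 1) * g l * g (k - 1))
    (i : ℤ) (hi : g i = 0) :
    ∀ k : ℤ, g k = 0 := by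
  have up : ∀ m : ℤ, g m = 0 → g (m + 1) = 0 := by
    intro m hm
    have h := hdb (m + 1) (m + 2)
    have e1 : m + 2 - 1 = m + 1 := by ring
    have e2 : m + 1 - 1 = m := by ring
    rw [e1, e2, hm, mul_zero] at h
    by_contra hne
    exact mul_ne_zero (mul_ne_zero (hK (m+1) (m+1)).ne' hne) hne h
  have down : ∀ m : ℤ, g m = 0 → g (m - 1) = 0 := by
    intro m hm
    have h := hdb (m - 1) m
    rw [hm] at h
    simp only [mul_zero, zero_mul] at h
    by_contra hne
    exact mul_ne_zero (mul_ne_zero (hK (m-1) (m-1)).ne' hne) hne h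
  intro k
  have main : ∀ n : ℤ, g (i + n) = 0 := by
    intro n
    induction n using Int.induction_on with
    | zero => simpa using hi
    | succ m ih =>
        have := up (i + m) ih
        convert this using 2
        ring
    | pred m ih =>
        have := down (i + -m) ih
        convert this using 2
        ring
  have := main (k - i)
  simpa using this
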